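/- Let G be a graph with no induced K_{1,3}, H1, or H2, and let v be any vertex with maximum clique Q_v in N(v). Then exactly one of the following holds: (1) N(v) \ Q_v induces a complete graph; (2) N(v) \ Q_v = {w, z} with wz ∉ E(G), and there exist w', z' ∈ Q_v with ww', zz' ∉ E(G), w adjacent to all of Q_v \ {w'}, and z adjacent to all of Q_v \ {z'}; (3) N(v) \ Q_v = {w, z, x} with xz, xw ∈ E(G), wz ∉ E(G), and there exist w', z' ∈ Q_v with ww', zz', xw', xz' ∉ E(G), w adjacent to all of Q_v \ {w'}, z adjacent to all of Q_v \ {z'}, and x adjacent to all of Q_v \ {w', z'}. -/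

import Mathlib

set_option maxHeartbeats 1000000
set_option linter.unusedSectionVars false


open SimpleGraph

def claw : SimpleGraph (Fin 1 ⊕ Fin 3) := completeBipartiteGraph (Fin 1) (Fin 3)

/-- `H1`: the path a-b-c-d-e together with chords ac and bd. -/
def H1 : SimpleGraph (Fin 5) :=
  fromEdgeSet {s(0, 1), s(1, 2), s(2, 3), s(3, 4), s(0, 2), s(1, 3)}

/-- `H2`: the 5-cycle a-b-c-d-e-a together with chords ac and bd. -/
def H2 : SimpleGraph (Fin 5) :=
  fromEdgeSet {s(0, 1), s(1, 2), s(2, 3), s(3, 4), s(4, 0), s(0, 2), s(1, 3)}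

def IsMaxCliqueInNbhd {V : Type*} (G : SimpleGraph V) (v : V) (Q : Finset V) : Prop :=
  ↑Q ⊆ G.neighborSet v ∧ G.IsClique ↑Q ∧
    ∀ R : Finset V, ↑R ⊆ G.neighborSet v → G.IsClique ↑R → R.card ≤ Q.card

section Helpers

variable {V : Type*} [DecidableEq V] {G : SimpleGraph V} {v : V} {Q : Finset V}

lemma claw_of {c a b d : V} (hab : a ≠ b) (had : a ≠ d) (hbd : b ≠ d)
    (hca : G.Adj c a) (hcb : G.Adj c b) (hcd : G.Adj c d)
    (nab : ¬G.Adj a b) (nad : ¬G.Adj a d) (nbd : ¬G.Adj b d) :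
    Nonempty (claw ↪g G) := by
  have hca' := hca.ne
  have hcb' := hcb.ne
  have hcd' := hcd.ne
  refine ⟨⟨⟨Sum.elim (fun _ => c) ![a, b, d], ?_⟩, ?_⟩⟩
  · rintro (x | x) (y | y) h <;> fin_cases x <;> fin_cases y <;> simp_all [claw]
  · intro x y
    change G.Adj (Sum.elim (fun _ => c) ![a, b, d] x) (Sum.elim (fun _ => c) ![a, b, d] y) ↔
      claw.Adj x y
    rcases x with x | x <;> rcases y with y | y <;> fin_cases x <;> fin_cases y <;>
      constructor <;> intro h <;> simp_all [claw, G.adj_comm, G.irrefl]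

lemma H1_of {a b c d e : V} (had : a ≠ d) (hae : a ≠ e) (hbe : b ≠ e) (hce : c ≠ e)
    (eab : G.Adj a b) (ebc : G.Adj b c) (ecd : G.Adj c d) (ede : G.Adj d e)
    (eac : G.Adj a c) (ebd : G.Adj b d)
    (nad : ¬G.Adj a d) (nae : ¬G.Adj a e) (nbe : ¬G.Adj b e) (nce : ¬G.Adj c e) :
    Nonempty (H1 ↪g G) := by
  have h1 := eab.ne; have h2 := ebc.ne; have h3 := ecd.ne; have h4 := ede.ne
  have h5 := eac.ne; have h6 := ebd.ne
  refine ⟨⟨⟨![a, b, c, d, e], ?_⟩, ?_⟩⟩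
  · intro x y h
    fin_cases x <;> fin_cases y <;> simp_all
  · intro x y
    change G.Adj (![a, b, c, d, e] x) (![a, b, c, d, e] y) ↔ H1.Adj x y
    fin_cases x <;> fin_cases y <;>
      simp_all [H1, Sym2.eq_iff, G.adj_comm, G.irrefl]

lemma H2_of {a b c d e : V} (had : a ≠ d) (hbe : b ≠ e) (hce : c ≠ e)
    (eab : G.Adj a b) (ebc : G.Adj b c) (ecd : G.Adj c d) (ede : G.Adj d e)
    (eea : G.Adj e a) (eac : G.Adj a c) (ebd : G.Adj b d)
    (nad : ¬G.Adj a d) (nbe : ¬G.Adj b e) (nce : ¬G.Adj c e) :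
    Nonempty (H2 ↪g G) := by
  have h1 := eab.ne; have h2 := ebc.ne; have h3 := ecd.ne; have h4 := ede.ne
  have h5 := eac.ne; have h6 := ebd.ne; have h7 := eea.ne
  have eea2 : G.Adj a e := eea.symm
  refine ⟨⟨⟨![a, b, c, d, e], ?_⟩, ?_⟩⟩
  · intro x y h
    fin_cases x <;> fin_cases y <;> simp_all
  · intro x y
    change G.Adj (![a, b, c, d, e] x) (![a, b, c, d, e] y) ↔ H2.Adj x y
    fin_cases x <;> fin_cases y <;>
      simp_all [H2, Sym2.eq_iff, G.adj_comm, G.irrefl]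

lemma clique_adj (hQ : IsMaxCliqueInNbhd G v Q) {a b : V} (ha : a ∈ Q) (hb : b ∈ Q)
    (hab : a ≠ b) : G.Adj a b :=
  hQ.2.1 (Finset.mem_coe.mpr ha) (Finset.mem_coe.mpr hb) hab

lemma miss_exists (hQ : IsMaxCliqueInNbhd G v Q) {w : V} (hvw : G.Adj v w) (hwQ : w ∉ Q) :
    ∃ w' ∈ Q, ¬ G.Adj w w' := by
  by_contra h
  push_neg at h
  have hsub : ↑(insert w Q) ⊆ G.neighborSet v := by
    rw [Finset.coe_insert]
    rintro x (rfl | hx)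
    · exact hvw
    · exact hQ.1 hx
  have hcl : G.IsClique ↑(insert w Q) := by
    rw [Finset.coe_insert]
    exact hQ.2.1.insert fun b hb _ => h b hb
  have := hQ.2.2 _ hsub hcl
  rw [Finset.card_insert_of_notMem hwQ] at this
  omega

lemma adj_or (hclaw : ¬ Nonempty (claw ↪g G)) {w z q : V}
    (hvw : G.Adj v w) (hvz : G.Adj v z) (hvq : G.Adj v q)
    (hwz : w ≠ z) (hwq : w ≠ q) (hzq : z ≠ q) (nwz : ¬ G.Adj w z) :
    G.Adj w q ∨ G.Adj z q := by
  by_contra h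
  push_neg at h
  exact hclaw (claw_of hwz hwq hzq hvw hvz hvq nwz h.1 h.2)

lemma miss_unique (hclaw : ¬ Nonempty (claw ↪g G)) (h1 : ¬ Nonempty (H1 ↪g G))
    (hQ : IsMaxCliqueInNbhd G v Q) {w z : V}
    (hvw : G.Adj v w) (hwQ : w ∉ Q) (hvz : G.Adj v z) (hzQ : z ∉ Q)
    (hwz : w ≠ z) (nwz : ¬ G.Adj w z) :
    ∃ w' ∈ Q, ¬ G.Adj w w' ∧ ∀ q ∈ Q, q ≠ w' → G.Adj w q := by
  obtain ⟨w', hw'Q, nww'⟩ := miss_exists hQ hvw hwQ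
  refine ⟨w', hw'Q, nww', ?_⟩
  intro q hq hqw'
  by_contra nwq
  obtain ⟨z', hz'Q, nzz'⟩ := miss_exists hQ hvz hzQ
  have hadj : ∀ p ∈ Q, ¬G.Adj w p → G.Adj z p := by
    intro p hp np
    rcases adj_or hclaw hvw hvz (hQ.1 (Finset.mem_coe.mpr hp)) hwz
        (by rintro rfl; exact hwQ hp) (by rintro rfl; exact hzQ hp) nwz with h | h
    · exact absurd h np
    · exact h
  have hzw' : G.Adj z w' := hadj w' hw'Q nww'
  have hzq : G.Adj z q := hadj q hq nwq
  have hwz' : G.Adj w z' := by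
    rcases adj_or hclaw hvz hvw (hQ.1 (Finset.mem_coe.mpr hz'Q)) hwz.symm
        (by rintro rfl; exact hzQ hz'Q) (by rintro rfl; exact hwQ hz'Q)
        (fun h => nwz h.symm) with h | h
    · exact absurd h nzz'
    · exact h
  have hz'w' : z' ≠ w' := by rintro rfl; exact nww' hwz'
  have hz'q : z' ≠ q := by rintro rfl; exact nwq hwz'
  exact h1 (H1_of (a := z) (b := w') (c := q) (d := z') (e := w)
      (by rintro rfl; exact hzQ hz'Q) hwz.symm
      (by rintro rfl; exact hwQ hw'Q) (by rintro rfl; exact hwQ hq)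
      hzw' (clique_adj hQ hw'Q hq hqw'.symm) (clique_adj hQ hq hz'Q hz'q.symm)
      hwz'.symm hzq (clique_adj hQ hw'Q hz'Q hz'w'.symm)
      nzz' (fun h => nwz h.symm) (fun h => nww' h.symm) (fun h => nwq h.symm))

lemma big_clique (hQ : IsMaxCliqueInNbhd G v Q) {x z z' : V} (hz'Q : z' ∈ Q)
    (hvx : G.Adj v x) (hxQ : x ∉ Q) (hvz : G.Adj v z) (hzQ : z ∉ Q)
    (hxz : G.Adj x z)
    (hxall : ∀ q ∈ Q, q ≠ z' → G.Adj x q) (hzall : ∀ q ∈ Q, q ≠ z' → G.Adj z q) :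
    False := by
  have hxz' : x ≠ z := hxz.ne
  have hzE : z ∉ Q.erase z' := fun h => hzQ (Finset.mem_of_mem_erase h)
  have hxI : x ∉ insert z (Q.erase z') := by
    simp only [Finset.mem_insert]
    rintro (rfl | h)
    · exact hxz' rfl
    · exact hxQ (Finset.mem_of_mem_erase h)
  have hsub : ↑(insert x (insert z (Q.erase z'))) ⊆ G.neighborSet v := by
    intro y hy
    simp only [Finset.coe_insert, Set.mem_insert_iff, Finset.mem_coe,
      Finset.mem_erase] at hy
    rcases hy with rfl | rfl | ⟨-, hy⟩
    · exact hvx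
    · exact hvz
    · exact hQ.1 (Finset.mem_coe.mpr hy)
  have hcl : G.IsClique ↑(insert x (insert z (Q.erase z'))) := by
    rw [Finset.coe_insert, Finset.coe_insert]
    refine IsClique.insert (IsClique.insert (hQ.2.1.subset ?_) ?_) ?_
    · intro y hy
      exact Finset.mem_coe.mpr (Finset.mem_of_mem_erase (Finset.mem_coe.mp hy))
    · intro b hb _
      have hb' := Finset.mem_coe.mp hb
      exact hzall b (Finset.mem_of_mem_erase hb') (Finset.ne_of_mem_erase hb')
    · rintro b hb _
      rcases hb with rfl | hb
      · exact hxz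
      · have hb' := Finset.mem_coe.mp hb
        exact hxall b (Finset.mem_of_mem_erase hb') (Finset.ne_of_mem_erase hb')
  have hle := hQ.2.2 _ hsub hcl
  rw [Finset.card_insert_of_notMem hxI, Finset.card_insert_of_notMem hzE,
    Finset.card_erase_of_mem hz'Q] at hle
  have hQ1 : 1 ≤ Q.card := Finset.card_pos.mpr ⟨z', hz'Q⟩
  omega

/-- The common hypotheses about a nonadjacent pair `w, z` in `N(v) \ Q`. -/
structure PairData (G : SimpleGraph V) (v : V) (Q : Finset V) (w z w' z' : V) : Prop where
  hvw : G.Adj v w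
  hwQ : w ∉ Q
  hvz : G.Adj v z
  hzQ : z ∉ Q
  hwz : w ≠ z
  nwz : ¬ G.Adj w z
  hw'Q : w' ∈ Q
  hz'Q : z' ∈ Q
  nww' : ¬ G.Adj w w'
  nzz' : ¬ G.Adj z z'
  hwall : ∀ q ∈ Q, q ≠ w' → G.Adj w q
  hzall : ∀ q ∈ Q, q ≠ z' → G.Adj z q
  hw'z' : w' ≠ z'

lemma PairData.symm {w z w' z' : V} (P : PairData G v Q w z w' z') :
    PairData G v Q z w z' w' :=
  ⟨P.hvz, P.hzQ, P.hvw, P.hwQ, P.hwz.symm, fun h => P.nwz h.symm, P.hz'Q, P.hw'Q,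
    P.nzz', P.nww', P.hzall, P.hwall, P.hw'z'.symm⟩

lemma x_adj_one (hclaw : ¬ Nonempty (claw ↪g G)) (h1 : ¬ Nonempty (H1 ↪g G))
    (hQ : IsMaxCliqueInNbhd G v Q) {w z w' z' x : V}
    (P : PairData G v Q w z w' z')
    (hvx : G.Adj v x) (hxQ : x ∉ Q) (hxw : x ≠ w) (hxz : x ≠ z)
    (exz : G.Adj x z) (nxw : ¬ G.Adj x w) : False := by
  have nwx : ¬ G.Adj w x := fun h => nxw h.symm
  obtain ⟨x', hx'Q, nxx', hxall⟩ :=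
    miss_unique hclaw h1 hQ hvx hxQ P.hvw P.hwQ hxw nxw
  have hxw' : G.Adj x w' := by
    rcases adj_or hclaw P.hvw hvx (hQ.1 (Finset.mem_coe.mpr P.hw'Q)) hxw.symm
        (by rintro rfl; exact P.hwQ P.hw'Q) (by rintro rfl; exact hxQ P.hw'Q)
        nwx with h | h
    · exact absurd h P.nww'
    · exact h
  have hw'x' : w' ≠ x' := by rintro rfl; exact nxx' hxw'
  by_cases hx'z' : x' = z'
  · subst hx'z'
    exact big_clique hQ hx'Q hvx hxQ P.hvz P.hzQ exz hxall P.hzall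
  · exact h1 (H1_of (a := x) (b := z) (c := w') (d := x') (e := w)
      (by rintro rfl; exact hxQ hx'Q) hxw P.hwz.symm
      (by rintro rfl; exact P.hwQ P.hw'Q)
      exz (P.hzall w' P.hw'Q P.hw'z') (clique_adj hQ P.hw'Q hx'Q hw'x')
      (P.hwall x' hx'Q hw'x'.symm).symm hxw' (P.hzall x' hx'Q hx'z')
      nxx' nxw (fun h => P.nwz h.symm) (fun h => P.nww' h.symm))

lemma x_adj (hclaw : ¬ Nonempty (claw ↪g G)) (h1 : ¬ Nonempty (H1 ↪g G))
    (hQ : IsMaxCliqueInNbhd G v Q) {w z w' z' x : V}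
    (P : PairData G v Q w z w' z')
    (hvx : G.Adj v x) (hxQ : x ∉ Q) (hxw : x ≠ w) (hxz : x ≠ z) :
    G.Adj x w ∧ G.Adj x z := by
  have hor : G.Adj w x ∨ G.Adj z x :=
    adj_or hclaw P.hvw P.hvz hvx P.hwz hxw.symm hxz.symm P.nwz
  constructor
  · by_contra nxw
    rcases hor with h | h
    · exact nxw h.symm
    · exact x_adj_one hclaw h1 hQ P hvx hxQ hxw hxz h.symm nxw
  · by_contra nxz
    rcases hor with h | h
    · exact x_adj_one hclaw h1 hQ P.symm hvx hxQ hxz hxw h.symm nxz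
    · exact nxz h.symm

lemma x_notadj (h2 : ¬ Nonempty (H2 ↪g G))
    (hQ : IsMaxCliqueInNbhd G v Q) {w z w' z' x : V}
    (P : PairData G v Q w z w' z')
    (hvx : G.Adj v x) (hxQ : x ∉ Q) (hxw : x ≠ w) (hxz : x ≠ z)
    (exw : G.Adj x w) (exz : G.Adj x z) : ¬ G.Adj x w' := by
  intro hxw'
  have hxall : ∀ m ∈ Q, m ≠ z' → G.Adj x m := by
    intro m hm hmz'
    by_contra nxm
    have hmw' : m ≠ w' := by rintro rfl; exact nxm hxw'
    exact h2 (H2_of (a := x) (b := w') (c := z) (d := m) (e := w)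
      (by rintro rfl; exact hxQ hm) (by rintro rfl; exact P.hwQ P.hw'Q) P.hwz.symm
      hxw' (P.hzall w' P.hw'Q P.hw'z').symm (P.hzall m hm hmz')
      (P.hwall m hm hmw').symm exw.symm exz (clique_adj hQ P.hw'Q hm hmw'.symm)
      nxm (fun h => P.nww' h.symm) (fun h => P.nwz h.symm))
  exact big_clique hQ P.hz'Q hvx hxQ P.hvz P.hzQ exz hxall P.hzall

lemma x_all (h1 : ¬ Nonempty (H1 ↪g G))
    (hQ : IsMaxCliqueInNbhd G v Q) {w z w' z' x : V}
    (P : PairData G v Q w z w' z')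
    (hxQ : x ∉ Q) (hxw : x ≠ w)
    (exw : G.Adj x w) (nxw' : ¬ G.Adj x w') (nxz' : ¬ G.Adj x z')
    {m : V} (hm : m ∈ Q) (hmw' : m ≠ w') (hmz' : m ≠ z') : G.Adj x m := by
  by_contra nxm
  exact h1 (H1_of (a := w') (b := m) (c := z') (d := w) (e := x)
    (by rintro rfl; exact P.hwQ P.hw'Q) (by rintro rfl; exact hxQ P.hw'Q)
    (by rintro rfl; exact hxQ hm) (by rintro rfl; exact hxQ P.hz'Q)
    (clique_adj hQ P.hw'Q hm hmw'.symm) (clique_adj hQ hm P.hz'Q hmz')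
    (P.hwall z' P.hz'Q P.hw'z'.symm).symm exw.symm
    (clique_adj hQ P.hw'Q P.hz'Q P.hw'z') (P.hwall m hm hmw').symm
    (fun h => P.nww' h.symm) (fun h => nxw' h.symm) (fun h => nxm h.symm)
    (fun h => nxz' h.symm))

lemma x_data (hclaw : ¬ Nonempty (claw ↪g G)) (h1 : ¬ Nonempty (H1 ↪g G))
    (h2 : ¬ Nonempty (H2 ↪g G))
    (hQ : IsMaxCliqueInNbhd G v Q) {w z w' z' x : V}
    (P : PairData G v Q w z w' z')
    (hvx : G.Adj v x) (hxQ : x ∉ Q) (hxw : x ≠ w) (hxz : x ≠ z) :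
    G.Adj x w ∧ G.Adj x z ∧ ¬ G.Adj x w' ∧ ¬ G.Adj x z' ∧
      ∀ q ∈ Q, q ≠ w' → q ≠ z' → G.Adj x q := by
  obtain ⟨exw, exz⟩ := x_adj hclaw h1 hQ P hvx hxQ hxw hxz
  have nxw' : ¬ G.Adj x w' := x_notadj h2 hQ P hvx hxQ hxw hxz exw exz
  have nxz' : ¬ G.Adj x z' := x_notadj h2 hQ P.symm hvx hxQ hxz hxw exz exw
  exact ⟨exw, exz, nxw', nxz', fun q hq hqw' hqz' =>
    x_all h1 hQ P hxQ hxw exw nxw' nxz' hq hqw' hqz'⟩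

lemma x_uniq (hclaw : ¬ Nonempty (claw ↪g G)) (h1 : ¬ Nonempty (H1 ↪g G))
    (h2 : ¬ Nonempty (H2 ↪g G))
    (hQ : IsMaxCliqueInNbhd G v Q) {w z w' z' x y : V}
    (P : PairData G v Q w z w' z')
    (hvx : G.Adj v x) (hxQ : x ∉ Q) (hxw : x ≠ w) (hxz : x ≠ z)
    (hvy : G.Adj v y) (hyQ : y ∉ Q) (hyw : y ≠ w) (hyz : y ≠ z)
    (hxy : x ≠ y) : False := by
  obtain ⟨exw, exz, nxw', nxz', hxall⟩ := x_data hclaw h1 h2 hQ P hvx hxQ hxw hxz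
  obtain ⟨eyw, eyz, nyw', nyz', hyall⟩ := x_data hclaw h1 h2 hQ P hvy hyQ hyw hyz
  by_cases hadj : G.Adj x y
  · -- big clique : {x, y, w} ∪ (Q \ {w', z'})
    set B := (Q.erase w').erase z' with hB
    have hBQ : ∀ {b}, b ∈ B → b ∈ Q := fun hb =>
      Finset.mem_of_mem_erase (Finset.mem_of_mem_erase hb)
    have hBw' : ∀ {b}, b ∈ B → b ≠ w' := fun hb =>
      Finset.ne_of_mem_erase (Finset.mem_of_mem_erase hb)
    have hBz' : ∀ {b}, b ∈ B → b ≠ z' := fun hb => Finset.ne_of_mem_erase hb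
    have hwB : w ∉ B := fun h => P.hwQ (hBQ h)
    have hyB : y ∉ insert w B := by
      simp only [Finset.mem_insert]
      rintro (rfl | h)
      · exact hyw rfl
      · exact hyQ (hBQ h)
    have hxB : x ∉ insert y (insert w B) := by
      simp only [Finset.mem_insert]
      rintro (rfl | rfl | h)
      · exact hxy rfl
      · exact hxw rfl
      · exact hxQ (hBQ h)
    have hsub : ↑(insert x (insert y (insert w B))) ⊆ G.neighborSet v := by
      intro u hu
      simp only [Finset.coe_insert, Set.mem_insert_iff, Finset.mem_coe] at hu
      rcases hu with rfl | rfl | rfl | hu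
      · exact hvx
      · exact hvy
      · exact P.hvw
      · exact hQ.1 (Finset.mem_coe.mpr (hBQ hu))
    have hcl : G.IsClique ↑(insert x (insert y (insert w B))) := by
      rw [Finset.coe_insert, Finset.coe_insert, Finset.coe_insert]
      refine IsClique.insert (IsClique.insert (IsClique.insert
          (hQ.2.1.subset ?_) ?_) ?_) ?_
      · intro u hu
        exact Finset.mem_coe.mpr (hBQ (Finset.mem_coe.mp hu))
      · intro b hb _
        have hb' := Finset.mem_coe.mp hb
        exact P.hwall b (hBQ hb') (hBw' hb')
      · rintro b (rfl | hb) _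
        · exact eyw
        · have hb' := Finset.mem_coe.mp hb
          exact hyall b (hBQ hb') (hBw' hb') (hBz' hb')
      · rintro b (rfl | rfl | hb) _
        · exact hadj
        · exact exw
        · have hb' := Finset.mem_coe.mp hb
          exact hxall b (hBQ hb') (hBw' hb') (hBz' hb')
    have hle := hQ.2.2 _ hsub hcl
    have hz'E : z' ∈ Q.erase w' := Finset.mem_erase.mpr ⟨P.hw'z'.symm, P.hz'Q⟩
    rw [Finset.card_insert_of_notMem hxB, Finset.card_insert_of_notMem hyB,
      Finset.card_insert_of_notMem hwB, hB, Finset.card_erase_of_mem hz'E,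
      Finset.card_erase_of_mem P.hw'Q] at hle
    have h2c : 2 ≤ Q.card := Finset.one_lt_card.mpr ⟨w', P.hw'Q, z', P.hz'Q, P.hw'z'⟩
    omega
  · obtain ⟨x'', hx''Q, nxx'', hxall''⟩ :=
      miss_unique hclaw h1 hQ hvx hxQ hvy hyQ hxy hadj
    have e1 : w' = x'' := by
      by_contra h
      exact nxw' (hxall'' w' P.hw'Q h)
    have e2 : z' = x'' := by
      by_contra h
      exact nxz' (hxall'' z' P.hz'Q h)
    exact P.hw'z' (e1.trans e2.symm)

end Helpers

variable {V : Type*} (G : SimpleGraph V) (v : V) (Q : Finset V)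

/-- Case 1: `N(v) \ Q` induces a complete graph. -/
def Case1 : Prop := G.IsClique (G.neighborSet v \ ↑Q)

/-- Case 2: `N(v) \ Q = {w, z}` with `wz ∉ E(G)`, and suitable `w', z' ∈ Q`. -/
def Case2 : Prop :=
  ∃ w z : V, w ≠ z ∧ G.neighborSet v \ ↑Q = {w, z} ∧ ¬ G.Adj w z ∧
    ∃ w' ∈ Q, ∃ z' ∈ Q, ¬ G.Adj w w' ∧ ¬ G.Adj z z' ∧
      (∀ q ∈ Q, q ≠ w' → G.Adj w q) ∧ (∀ q ∈ Q, q ≠ z' → G.Adj z q)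

/-- Case 3: `N(v) \ Q = {w, z, x}` with `xz, xw ∈ E(G)`, `wz ∉ E(G)`,
and suitable `w', z' ∈ Q`. -/
def Case3 : Prop :=
  ∃ w z x : V, w ≠ z ∧ w ≠ x ∧ z ≠ x ∧ G.neighborSet v \ ↑Q = {w, z, x} ∧
    G.Adj x z ∧ G.Adj x w ∧ ¬ G.Adj w z ∧
    ∃ w' ∈ Q, ∃ z' ∈ Q, ¬ G.Adj w w' ∧ ¬ G.Adj z z' ∧ ¬ G.Adj x w' ∧ ¬ G.Adj x z' ∧
      (∀ q ∈ Q, q ≠ w' → G.Adj w q) ∧ (∀ q ∈ Q, q ≠ z' → G.Adj z q) ∧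
      (∀ q ∈ Q, q ≠ w' → q ≠ z' → G.Adj x q)

theorem stmt_12 [Fintype V] [DecidableEq V]
    (hclaw : ¬ Nonempty (claw ↪g G)) (h1 : ¬ Nonempty (H1 ↪g G))
    (h2 : ¬ Nonempty (H2 ↪g G)) (hQ : IsMaxCliqueInNbhd G v Q) :
    (Case1 G v Q ∨ Case2 G v Q ∨ Case3 G v Q) ∧
      ¬ (Case1 G v Q ∧ Case2 G v Q) ∧ ¬ (Case1 G v Q ∧ Case3 G v Q) ∧
      ¬ (Case2 G v Q ∧ Case3 G v Q) := by

  constructor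
  · by_cases hC : G.IsClique (G.neighborSet v \ ↑Q)
    · exact Or.inl hC
    · rw [SimpleGraph.isClique_iff, Set.Pairwise] at hC
      push_neg at hC
      obtain ⟨w, hw, z, hz, hwz, nwz⟩ := hC
      have hvw : G.Adj v w := hw.1
      have hwQ : w ∉ Q := fun h => hw.2 (Finset.mem_coe.mpr h)
      have hvz : G.Adj v z := hz.1
      have hzQ : z ∉ Q := fun h => hz.2 (Finset.mem_coe.mpr h)
      obtain ⟨w', hw'Q, nww', hwall⟩ :=
        miss_unique hclaw h1 hQ hvw hwQ hvz hzQ hwz nwz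
      obtain ⟨z', hz'Q, nzz', hzall⟩ :=
        miss_unique hclaw h1 hQ hvz hzQ hvw hwQ hwz.symm (fun h => nwz h.symm)
      have hw'z' : w' ≠ z' := by
        rintro rfl
        rcases adj_or hclaw hvw hvz (hQ.1 (Finset.mem_coe.mpr hw'Q)) hwz
            (by rintro rfl; exact hwQ hw'Q) (by rintro rfl; exact hzQ hw'Q)
            nwz with h | h
        · exact nww' h
        · exact nzz' h
      have P : PairData G v Q w z w' z' :=
        ⟨hvw, hwQ, hvz, hzQ, hwz, nwz, hw'Q, hz'Q, nww', nzz', hwall, hzall, hw'z'⟩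
      by_cases hrest : ∀ s ∈ G.neighborSet v \ ↑Q, s = w ∨ s = z
      · refine Or.inr (Or.inl ⟨w, z, hwz, ?_, nwz, w', hw'Q, z', hz'Q,
          nww', nzz', hwall, hzall⟩)
        ext s
        simp only [Set.mem_insert_iff, Set.mem_singleton_iff]
        constructor
        · exact hrest s
        · rintro (rfl | rfl)
          · exact hw
          · exact hz
      · push_neg at hrest
        obtain ⟨x, hx, hxw, hxz⟩ := hrest
        have hvx : G.Adj v x := hx.1
        have hxQ : x ∉ Q := fun h => hx.2 (Finset.mem_coe.mpr h)
        obtain ⟨exw, exz, nxw', nxz', hxall⟩ := x_data hclaw h1 h2 hQ P hvx hxQ hxw hxz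
        refine Or.inr (Or.inr ⟨w, z, x, hwz, hxw.symm, hxz.symm, ?_, exz, exw,
          nwz, w', hw'Q, z', hz'Q, nww', nzz', nxw', nxz', hwall, hzall, hxall⟩)
        ext s
        simp only [Set.mem_insert_iff, Set.mem_singleton_iff]
        constructor
        · intro hs
          by_cases hsw : s = w
          · exact Or.inl hsw
          by_cases hsz : s = z
          · exact Or.inr (Or.inl hsz)
          by_cases hsx : s = x
          · exact Or.inr (Or.inr hsx)
          · exact absurd (x_uniq hclaw h1 h2 hQ P hs.1
              (fun h => hs.2 (Finset.mem_coe.mpr h)) hsw hsz hvx hxQ hxw hxz hsx) not_false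
        · rintro (rfl | rfl | rfl)
          · exact hw
          · exact hz
          · exact hx
  · refine ⟨?_, ?_, ?_⟩
    · rintro ⟨hc1, w, z, hwz, hS, nwz, -⟩
      have hw : w ∈ G.neighborSet v \ ↑Q := by rw [hS]; exact Set.mem_insert _ _
      have hz : z ∈ G.neighborSet v \ ↑Q := by
        rw [hS]; exact Set.mem_insert_of_mem _ rfl
      exact nwz (hc1 hw hz hwz)
    · rintro ⟨hc1, w, z, x, hwz, -, -, hS, -, -, nwz, -⟩
      have hw : w ∈ G.neighborSet v \ ↑Q := by rw [hS]; exact Set.mem_insert _ _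
      have hz : z ∈ G.neighborSet v \ ↑Q := by
        rw [hS]; exact Set.mem_insert_of_mem _ (Set.mem_insert _ _)
      exact nwz (hc1 hw hz hwz)
    · rintro ⟨⟨w, z, hwz, hS2, -⟩, ⟨w2, z2, x2, h12, h13, h23, hS3, -⟩⟩
      rw [hS2] at hS3
      have hw2 : w2 ∈ ({w, z} : Set V) := by rw [hS3]; exact Set.mem_insert _ _
      have hz2 : z2 ∈ ({w, z} : Set V) := by
        rw [hS3]; exact Set.mem_insert_of_mem _ (Set.mem_insert _ _)
      have hx2 : x2 ∈ ({w, z} : Set V) := by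
        rw [hS3]; exact Set.mem_insert_of_mem _ (Set.mem_insert_of_mem _ rfl)
      simp only [Set.mem_insert_iff, Set.mem_singleton_iff] at hw2 hz2 hx2
      rcases hw2 with rfl | rfl <;> rcases hz2 with rfl | rfl <;>
        rcases hx2 with rfl | rfl <;> simp_all
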